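/- Assume β > 1/2, and for each ℓ ≥ 2 let B_ℓ be any bounded continuous function on ℝ with f_G^{⋆ℓ}(λ) = B_ℓ(λ) for almost every λ. Define V_j := Σ_{ℓ=2}^{∞} c_ℓ² ∫_ℝ f_G^{⋆ℓ}(λ) |ψ̂(2^j λ)|² dλ. Then lim_{j→∞} 2^j · V_j = (Σ_{ℓ=2}^{∞} c_ℓ² B_ℓ(0)) · ∫_ℝ |ψ̂(λ)|² dλ. -/

import Mathlib

open MeasureTheory Filter
open scoped Convolution

/-- Convolution of two real functions on ℝ. -/
noncomputable def conv (f g : ℝ → ℝ) (x : ℝ) : ℝ := ∫ y : ℝ, f (x - y) * g y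

/-- ℓ-fold convolution of `f` with itself: `iterConv f 1 = f`,
`iterConv f (ℓ+1) = (iterConv f ℓ) ⋆ f`. Junk value `0` at `ℓ = 0`. -/
noncomputable def iterConv (f : ℝ → ℝ) : ℕ → ℝ → ℝ
  | 0 => fun _ => 0
  | 1 => f
  | (n + 2) => conv (iterConv f (n + 1)) f

/-- Fourier transform `ψ̂(λ) = ∫ e^{-iλt} ψ(t) dt`. -/
noncomputable def fhat (ψ : ℝ → ℝ) (l : ℝ) : ℂ :=
  ∫ t : ℝ, Complex.exp (-(Complex.I * (l : ℂ) * (t : ℂ))) * (ψ t : ℂ)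


section Helpers
open Set


lemma conv_eq_convolution (f g : ℝ → ℝ) :
    conv f g = (g ⋆[ContinuousLinearMap.mul ℝ ℝ, volume] f) := by
  funext x
  simp only [conv, convolution, ContinuousLinearMap.mul_apply']
  simp_rw [mul_comm]

lemma conv_integrable {f g : ℝ → ℝ} (hf : Integrable f) (hg : Integrable g) :
    Integrable (conv f g) := by
  rw [conv_eq_convolution]
  exact hg.integrable_convolution (ContinuousLinearMap.mul ℝ ℝ) hf

lemma conv_integral {f g : ℝ → ℝ} (hf : Integrable f) (hg : Integrable g) :
    (∫ x, conv f g x) = (∫ x, f x) * (∫ x, g x) := by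
  rw [conv_eq_convolution]
  rw [integral_convolution (L := ContinuousLinearMap.mul ℝ ℝ) hg hf]
  simp [mul_comm]

lemma conv_nonneg {f g : ℝ → ℝ} (hf : ∀ x, 0 ≤ f x) (hg : ∀ x, 0 ≤ g x) (x : ℝ) :
    0 ≤ conv f g x :=
  integral_nonneg fun y => mul_nonneg (hf _) (hg _)

lemma integrable_exp_neg_abs {κ : ℝ} (hκ : 0 < κ) :
    Integrable (fun x : ℝ => Real.exp (-κ * |x|)) := by
  have h1 : IntegrableOn (fun x : ℝ => Real.exp (-κ * |x|)) (Ioi 0) := by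
    refine (exp_neg_integrableOn_Ioi 0 hκ).congr_fun (fun x hx => ?_) measurableSet_Ioi
    rw [abs_of_pos hx]
  have h2 : IntegrableOn (fun x : ℝ => Real.exp (-κ * |x|)) (Iic 0) := by
    have ha : Integrable ((Iic (0:ℝ)).indicator Real.exp) :=
      (integrable_indicator_iff measurableSet_Iic).mpr (integrableOn_exp_Iic 0)
    have hb : Integrable (fun x : ℝ => ((Iic (0:ℝ)).indicator Real.exp) (κ * x)) :=
      ha.comp_mul_left' hκ.ne'
    have hc : (fun x : ℝ => ((Iic (0:ℝ)).indicator Real.exp) (κ * x))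
        = (Iic (0:ℝ)).indicator (fun x => Real.exp (-κ * |x|)) := by
      funext x
      by_cases hx : x ≤ 0
      · have hm : κ * x ∈ Iic (0:ℝ) :=
          mem_Iic.mpr (mul_nonpos_iff.mpr (Or.inl ⟨hκ.le, hx⟩))
        rw [indicator_of_mem hm, indicator_of_mem (mem_Iic.mpr hx), abs_of_nonpos hx]
        congr 1; ring
      · have hx' : 0 < x := lt_of_not_ge hx
        have hm : κ * x ∉ Iic (0:ℝ) := by
          simp only [mem_Iic, not_le]; exact mul_pos hκ hx'
        rw [indicator_of_notMem hm, indicator_of_notMem (by simpa using hx)]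
    rw [hc] at hb
    exact (integrable_indicator_iff measurableSet_Iic).mp hb
  have h3 := h2.union h1
  rwa [Iic_union_Ioi, integrableOn_univ] at h3

lemma rpow_sq_exp_bound {α κ : ℝ} (hα : 1 ≤ α) (hκ : 0 < κ) :
    ∃ C : ℝ, 0 < C ∧ ∀ t : ℝ, 0 ≤ t →
      (t ^ α) ^ 2 * Real.exp (-(2 * κ) * t) ≤ C * Real.exp (-κ * t) := by
  set n : ℕ := ⌈α⌉₊ with hn
  refine ⟨(Nat.factorial (2*n) : ℝ) / κ ^ (2 * n) + 1, by positivity, fun t ht => ?_⟩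
  set C : ℝ := (Nat.factorial (2*n) : ℝ) / κ ^ (2 * n) + 1 with hC
  have hC_pos : 0 < C := by positivity
  have h1 : (t ^ α) ^ 2 = t ^ (α * 2) := by
    rw [← Real.rpow_natCast (t ^ α) 2, ← Real.rpow_mul ht]
    norm_num
  have h2 : t ^ (α * 2) ≤ C * Real.exp (κ * t) := by
    have hexp1 : (1:ℝ) ≤ Real.exp (κ * t) := Real.one_le_exp (by positivity)
    rcases le_total t 1 with h | h
    · have hle : t ^ (α * 2) ≤ 1 := Real.rpow_le_one ht h (by positivity)
      have hC1 : (1:ℝ) ≤ C := le_add_of_nonneg_left (by positivity)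
      nlinarith [mul_le_mul_of_nonneg_left hexp1 hC_pos.le]
    · have hle : t ^ (α * 2) ≤ t ^ ((2 * n : ℕ) : ℝ) := by
        apply Real.rpow_le_rpow_of_exponent_le h
        have h2n := Nat.le_ceil α
        push_cast
        nlinarith [h2n]
      rw [Real.rpow_natCast] at hle
      have hp := Real.pow_div_factorial_le_exp (x := κ * t) (by positivity) (2 * n)
      have h4 : κ ^ (2*n) * t ^ (2*n) ≤ (Nat.factorial (2*n) : ℝ) * Real.exp (κ * t) := by
        have h0 := (div_le_iff₀ (by positivity : (0:ℝ) < (Nat.factorial (2*n) : ℝ))).mp hp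
        rw [mul_pow] at h0
        linarith
      have h5 : t ^ (2*n) ≤ (Nat.factorial (2*n) : ℝ) / κ ^ (2*n) * Real.exp (κ * t) := by
        rw [div_mul_eq_mul_div, le_div_iff₀ (by positivity)]
        nlinarith [h4]
      have h6 : (Nat.factorial (2*n) : ℝ) / κ ^ (2*n) * Real.exp (κ * t) ≤ C * Real.exp (κ * t) := by
        apply mul_le_mul_of_nonneg_right _ (Real.exp_nonneg _)
        rw [hC]; linarith
      exact le_trans hle (le_trans h5 h6)
  have harg : κ * t + -(2 * κ) * t = -κ * t := by ring
  calc (t ^ α) ^ 2 * Real.exp (-(2 * κ) * t)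
      ≤ C * Real.exp (κ * t) * Real.exp (-(2 * κ) * t) := by
        rw [h1]; exact mul_le_mul_of_nonneg_right h2 (Real.exp_nonneg _)
    _ = C * Real.exp (-κ * t) := by rw [mul_assoc, ← Real.exp_add, harg]

lemma integrableOn_abs_rpow_Icc {s : ℝ} (hs : -1 < s) :
    IntegrableOn (fun x : ℝ => |x| ^ s) (Icc (-1 : ℝ) 1) := by
  set q : ℝ → ℝ := fun x => |x| ^ s with hq
  have hq1 : IntegrableOn q (Ioo (0:ℝ) 1) := by
    refine ((intervalIntegral.integrableOn_Ioo_rpow_iff one_pos).mpr hs).congr_fun (fun x hx => ?_) measurableSet_Ioo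
    rw [hq]; simp only; rw [abs_of_pos hx.1]
  have hq2 : IntegrableOn q (Ioo (-1:ℝ) 0) := by
    have ha : Integrable ((Ioo (0:ℝ) 1).indicator q) :=
      (integrable_indicator_iff measurableSet_Ioo).mpr hq1
    have hb : Integrable (fun x : ℝ => ((Ioo (0:ℝ) 1).indicator q) (-x)) := ha.comp_neg
    have hc : (fun x : ℝ => ((Ioo (0:ℝ) 1).indicator q) (-x))
        = (Ioo (-1:ℝ) 0).indicator q := by
      funext x
      by_cases hx : x ∈ Ioo (-1:ℝ) 0
      · have hm : -x ∈ Ioo (0:ℝ) 1 := by constructor <;> [linarith [hx.2]; linarith [hx.1]]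
        rw [indicator_of_mem hm, indicator_of_mem hx, hq]
        simp [abs_neg]
      · have hm : -x ∉ Ioo (0:ℝ) 1 := by
          simp only [mem_Ioo, not_and_or, not_lt] at hx ⊢
          rcases hx with h | h
          · right; linarith
          · left; linarith
        rw [indicator_of_notMem hm, indicator_of_notMem hx]
    rw [hc] at hb
    exact (integrable_indicator_iff measurableSet_Ioo).mp hb
  have hqE : IntegrableOn q ({-1, 0, 1} : Set ℝ) := by
    have hE0 : volume ({-1, 0, 1} : Set ℝ) = 0 :=
      (Set.toFinite _).measure_zero volume
    unfold IntegrableOn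
    rw [Measure.restrict_eq_zero.mpr hE0]
    exact integrable_zero_measure
  have hsub : Icc (-1:ℝ) 1 ⊆ Ioo (-1:ℝ) 0 ∪ Ioo (0:ℝ) 1 ∪ ({-1, 0, 1} : Set ℝ) := by
    intro x hx
    rcases eq_or_lt_of_le hx.1 with h | h
    · exact Or.inr (by simp [← h])
    rcases lt_trichotomy x 0 with h0 | h0 | h0
    · exact Or.inl (Or.inl ⟨h, h0⟩)
    · exact Or.inr (by simp [h0])
    rcases eq_or_lt_of_le hx.2 with h1 | h1
    · exact Or.inr (by simp [h1])
    · exact Or.inl (Or.inr ⟨h0, h1⟩)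
  exact ((hq2.union hq1).union hqE).mono_set hsub

lemma main_aux
    (f_G : ℝ → ℝ)
    (g : ℝ → ℝ) (hg_cont : Continuous g) (hg_nonneg : ∀ x, 0 ≤ g x) (hg_int : Integrable g)
    (M₂ : ℝ)
    (hIter_nonneg : ∀ m : ℕ, ∀ x, 0 ≤ iterConv f_G (m + 2) x)
    (hIter_le : ∀ m : ℕ, ∀ x, iterConv f_G (m + 2) x ≤ M₂)
    (c : ℕ → ℝ) (hc : Summable fun ℓ : ℕ => (c (ℓ + 2)) ^ 2)
    (B : ℕ → ℝ → ℝ) (hB_cont : ∀ ℓ : ℕ, 2 ≤ ℓ → Continuous (B ℓ))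
    (hB : ∀ ℓ : ℕ, 2 ≤ ℓ → ∀ᵐ l : ℝ ∂volume, iterConv f_G ℓ l = B ℓ l)
    (V : ℕ → ℝ)
    (hV : ∀ j : ℕ, V j =
      ∑' ℓ : ℕ, (c (ℓ + 2)) ^ 2 * ∫ l : ℝ, iterConv f_G (ℓ + 2) l * g ((2 : ℝ) ^ j * l)) :
    Tendsto (fun j : ℕ => (2 : ℝ) ^ (j : ℝ) * V j) atTop
      (nhds ((∑' ℓ : ℕ, (c (ℓ + 2)) ^ 2 * B (ℓ + 2) 0) * ∫ l : ℝ, g l)) := by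
  have hqmp : ∀ b : ℝ, b ≠ 0 →
      Measure.QuasiMeasurePreserving (fun x : ℝ => b * x) volume volume := by
    intro b hb
    refine ⟨measurable_const_mul b, ?_⟩
    rw [Real.map_volume_mul_left hb]
    exact Measure.smul_absolutelyContinuous
  have haeB : ∀ j ℓ : ℕ, ∀ᵐ μ : ℝ ∂volume,
      iterConv f_G (ℓ + 2) (((2 : ℝ) ^ j)⁻¹ * μ) = B (ℓ + 2) (((2 : ℝ) ^ j)⁻¹ * μ) := by
    intro j ℓ
    have hb : (0:ℝ) < (2:ℝ) ^ j := pow_pos two_pos j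
    exact (hqmp _ (inv_ne_zero hb.ne')).ae (hB (ℓ + 2) (by omega))
  set T : ℕ → ℕ → ℝ := fun j ℓ =>
    (c (ℓ + 2)) ^ 2 * ∫ μ : ℝ, B (ℓ + 2) (((2 : ℝ) ^ j)⁻¹ * μ) * g μ with hT
  have hstep : ∀ j : ℕ, (2 : ℝ) ^ (j : ℝ) * V j = ∑' ℓ : ℕ, T j ℓ := by
    intro j
    have hb : (0:ℝ) < (2:ℝ) ^ j := pow_pos two_pos j
    rw [Real.rpow_natCast, hV j, ← tsum_mul_left]
    refine tsum_congr fun ℓ => ?_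
    have h1 : (∫ l : ℝ, iterConv f_G (ℓ + 2) l * g ((2 : ℝ) ^ j * l))
        = |((2 : ℝ) ^ j)⁻¹| • ∫ μ : ℝ,
            iterConv f_G (ℓ + 2) (((2 : ℝ) ^ j)⁻¹ * μ) * g μ := by
      rw [← Measure.integral_comp_mul_left
        (fun μ : ℝ => iterConv f_G (ℓ + 2) (((2 : ℝ) ^ j)⁻¹ * μ) * g μ) ((2:ℝ) ^ j)]
      refine integral_congr_ae (Filter.EventuallyEq.of_eq ?_)
      funext l
      simp only [inv_mul_cancel_left₀ hb.ne']
    have h2 : (∫ μ : ℝ, iterConv f_G (ℓ + 2) (((2 : ℝ) ^ j)⁻¹ * μ) * g μ)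
        = ∫ μ : ℝ, B (ℓ + 2) (((2 : ℝ) ^ j)⁻¹ * μ) * g μ := by
      refine integral_congr_ae ?_
      filter_upwards [haeB j ℓ] with μ hμ
      rw [hμ]
    show (2:ℝ) ^ j * ((c (ℓ + 2)) ^ 2 * ∫ l : ℝ, iterConv f_G (ℓ + 2) l * g ((2 : ℝ) ^ j * l))
        = (c (ℓ + 2)) ^ 2 * ∫ μ : ℝ, B (ℓ + 2) (((2 : ℝ) ^ j)⁻¹ * μ) * g μ
    rw [h1, h2, smul_eq_mul, abs_of_pos (inv_pos.mpr hb)]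
    field_simp
  have h2j : Tendsto (fun j : ℕ => ((2:ℝ) ^ j)⁻¹) atTop (nhds 0) :=
    Tendsto.inv_tendsto_atTop (tendsto_pow_atTop_atTop_of_one_lt one_lt_two)
  have hmul : ∀ μ : ℝ, Tendsto (fun j : ℕ => ((2:ℝ) ^ j)⁻¹ * μ) atTop (nhds 0) := by
    intro μ
    simpa using h2j.mul_const μ
  have hlim : ∀ ℓ : ℕ, Tendsto (fun j : ℕ => T j ℓ) atTop
      (nhds ((c (ℓ + 2)) ^ 2 * (B (ℓ + 2) 0 * ∫ l : ℝ, g l))) := by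
    intro ℓ
    simp only [hT]
    refine Tendsto.const_mul _ ?_
    have hinner : Tendsto
        (fun j : ℕ => ∫ μ : ℝ, B (ℓ + 2) (((2 : ℝ) ^ j)⁻¹ * μ) * g μ) atTop
        (nhds (∫ μ : ℝ, B (ℓ + 2) 0 * g μ)) := by
      apply tendsto_integral_filter_of_dominated_convergence (bound := fun μ => M₂ * g μ)
      · exact Eventually.of_forall fun j =>
          (((hB_cont (ℓ + 2) (by omega)).comp
            (continuous_const.mul continuous_id)).mul hg_cont).aestronglyMeasurable
      · refine Eventually.of_forall fun j => ?_
        filter_upwards [haeB j ℓ] with μ hμ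
        rw [norm_mul, Real.norm_of_nonneg (hg_nonneg μ), ← hμ,
          Real.norm_of_nonneg (hIter_nonneg ℓ _)]
        exact mul_le_mul_of_nonneg_right (hIter_le ℓ _) (hg_nonneg μ)
      · exact hg_int.const_mul M₂
      · exact ae_of_all _ fun μ =>
          (((hB_cont (ℓ + 2) (by omega)).tendsto 0).comp (hmul μ)).mul_const (g μ)
    rwa [integral_const_mul] at hinner
  have hbound : ∀ j : ℕ, ∀ ℓ : ℕ, ‖T j ℓ‖ ≤ (c (ℓ + 2)) ^ 2 * (M₂ * ∫ l : ℝ, g l) := by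
    intro j ℓ
    simp only [hT]
    have h1 : ‖∫ μ : ℝ, B (ℓ + 2) (((2 : ℝ) ^ j)⁻¹ * μ) * g μ‖ ≤ ∫ μ : ℝ, M₂ * g μ := by
      refine norm_integral_le_of_norm_le (hg_int.const_mul M₂) ?_
      filter_upwards [haeB j ℓ] with μ hμ
      rw [norm_mul, Real.norm_of_nonneg (hg_nonneg μ), ← hμ,
        Real.norm_of_nonneg (hIter_nonneg ℓ _)]
      exact mul_le_mul_of_nonneg_right (hIter_le ℓ _) (hg_nonneg μ)
    rw [norm_mul, Real.norm_of_nonneg (sq_nonneg _)]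
    rw [integral_const_mul] at h1
    exact mul_le_mul_of_nonneg_left h1 (sq_nonneg _)
  have h1 := tendsto_tsum_of_dominated_convergence (𝓕 := atTop)
    (hc.mul_right (M₂ * ∫ l : ℝ, g l)) hlim (Eventually.of_forall hbound)
  have h2 : (fun j : ℕ => (2 : ℝ) ^ (j : ℝ) * V j) = fun j : ℕ => ∑' ℓ : ℕ, T j ℓ :=
    funext hstep
  rw [h2]
  convert h1 using 2
  rw [← tsum_mul_right]
  exact tsum_congr fun ℓ => by ring

end Helpers

theorem stmt_5
    (β : ℝ) (hβ : β ∈ Set.Ioo (0 : ℝ) 1) (hβhalf : 1 / 2 < β)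
    (C_G : ℝ → ℝ) (hCG_cont : Continuous C_G) (hCG_bdd : ∃ M : ℝ, ∀ x, C_G x ≤ M)
    (hCG_nonneg : ∀ x, 0 ≤ C_G x) (hCG_even : ∀ x, C_G (-x) = C_G x)
    (hCG0 : 0 < C_G 0)
    (f_G : ℝ → ℝ) (hfG_nonneg : ∀ x, 0 ≤ f_G x)
    (hfG : ∀ x : ℝ, x ≠ 0 → f_G x = C_G x * |x| ^ (β - 1))
    (hfG_int : Integrable f_G) (hfG_one : (∫ l : ℝ, f_G l) = 1)
    (ψ : ℝ → ℝ) (hψ_int : Integrable ψ) (hψ_sq : Integrable (fun t => (ψ t) ^ 2))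
    (hψ_zero : (∫ t : ℝ, ψ t) = 0)
    (α K κ : ℝ) (hα : 1 ≤ α) (hK : 0 < K) (hκ : 0 < κ)
    (Cψ : ℝ → ℂ) (hCψ_cont : Continuous Cψ)
    (hCψ0 : 0 < (Cψ 0).re ∧ (Cψ 0).im = 0)
    (hCψ_bdd : ∀ l : ℝ, ‖Cψ l‖ ≤ K * Real.exp (-κ * |l|))
    (hhat : ∀ l : ℝ, fhat ψ l = Cψ l * ((|l| ^ α : ℝ) : ℂ))
    (c : ℕ → ℝ) (hc : Summable (fun ℓ : ℕ => (c (ℓ + 2)) ^ 2))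
    (B : ℕ → ℝ → ℝ)
    (hB_cont : ∀ ℓ : ℕ, 2 ≤ ℓ → Continuous (B ℓ))
    (hB_bdd : ∀ ℓ : ℕ, 2 ≤ ℓ → ∃ M : ℝ, ∀ x, |B ℓ x| ≤ M)
    (hB : ∀ ℓ : ℕ, 2 ≤ ℓ → ∀ᵐ l : ℝ ∂volume, iterConv f_G ℓ l = B ℓ l)
    (V : ℕ → ℝ)
    (hV : ∀ j : ℕ, V j =
      ∑' ℓ : ℕ, (c (ℓ + 2)) ^ 2 *
        ∫ l : ℝ, iterConv f_G (ℓ + 2) l * ‖fhat ψ ((2 : ℝ) ^ j * l)‖ ^ 2) :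
    Tendsto (fun j : ℕ => (2 : ℝ) ^ (j : ℝ) * V j) atTop
      (nhds ((∑' ℓ : ℕ, (c (ℓ + 2)) ^ 2 * B (ℓ + 2) 0) *
        ∫ l : ℝ, ‖fhat ψ l‖ ^ 2)) := by
  obtain ⟨Mc, hMc⟩ := hCG_bdd
  have hMc0 : 0 < Mc := lt_of_lt_of_le hCG0 (hMc 0)
  have hβ1 := hβ.2
  set g : ℝ → ℝ := fun l => ‖fhat ψ l‖ ^ 2 with hg_def
  have hfhat_eq : fhat ψ = fun l => Cψ l * ((|l| ^ α : ℝ) : ℂ) := funext hhat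
  have habs_cont : Continuous fun l : ℝ => |l| ^ α :=
    continuous_abs.rpow_const fun x => Or.inr (by linarith)
  have hfhat_cont : Continuous (fhat ψ) := by
    rw [hfhat_eq]
    exact hCψ_cont.mul (Complex.continuous_ofReal.comp habs_cont)
  have hg_cont : Continuous g := (continuous_norm.comp hfhat_cont).pow 2
  have hg_nonneg : ∀ l, 0 ≤ g l := fun l => by
    simp only [hg_def]; positivity
  obtain ⟨C, hC_pos, hC⟩ := rpow_sq_exp_bound hα hκ
  have hg_le : ∀ l : ℝ, g l ≤ K ^ 2 * C * Real.exp (-κ * |l|) := by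
    intro l
    have h1 : ‖fhat ψ l‖ = ‖Cψ l‖ * |l| ^ α := by
      rw [hhat l, norm_mul, Complex.norm_real,
        Real.norm_of_nonneg (Real.rpow_nonneg (abs_nonneg l) α)]
    have hexp2 : Real.exp (-κ * |l|) ^ 2 = Real.exp (-(2 * κ) * |l|) := by
      rw [← Real.exp_nat_mul]
      congr 1
      push_cast
      ring
    have h2 : g l = ‖Cψ l‖ ^ 2 * (|l| ^ α) ^ 2 := by
      simp only [hg_def]; rw [h1, mul_pow]
    have h3 : ‖Cψ l‖ ^ 2 ≤ (K * Real.exp (-κ * |l|)) ^ 2 :=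
      pow_le_pow_left₀ (norm_nonneg _) (hCψ_bdd l) 2
    have h4 : g l ≤ K ^ 2 * ((|l| ^ α) ^ 2 * Real.exp (-(2 * κ) * |l|)) := by
      rw [h2]
      calc ‖Cψ l‖ ^ 2 * (|l| ^ α) ^ 2
          ≤ (K * Real.exp (-κ * |l|)) ^ 2 * (|l| ^ α) ^ 2 :=
            mul_le_mul_of_nonneg_right h3 (by positivity)
        _ = K ^ 2 * ((|l| ^ α) ^ 2 * Real.exp (-(2 * κ) * |l|)) := by
            rw [mul_pow, hexp2]; ring
    calc g l ≤ K ^ 2 * ((|l| ^ α) ^ 2 * Real.exp (-(2 * κ) * |l|)) := h4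
      _ ≤ K ^ 2 * (C * Real.exp (-κ * |l|)) :=
          mul_le_mul_of_nonneg_left (hC |l| (abs_nonneg l)) (by positivity)
      _ = K ^ 2 * C * Real.exp (-κ * |l|) := by ring
  have hg_int : Integrable g := by
    refine (((integrable_exp_neg_abs hκ).const_mul (K ^ 2 * C)).mono'
      hg_cont.aestronglyMeasurable ?_)
    refine ae_of_all _ fun l => ?_
    rw [Real.norm_of_nonneg (hg_nonneg l)]
    exact hg_le l
  have hfG_le : ∀ x : ℝ, x ≠ 0 → f_G x ≤ Mc * |x| ^ (β - 1) := by
    intro x hx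
    rw [hfG x hx]
    exact mul_le_mul_of_nonneg_right (hMc x) (Real.rpow_nonneg (abs_nonneg x) _)
  have hae0 : ∀ᵐ x : ℝ ∂volume, x ≠ 0 := by
    refine ae_iff.mpr ?_
    have h0 : {x : ℝ | ¬ x ≠ 0} = {(0:ℝ)} := by ext x; simp
    rw [h0]
    exact measure_singleton 0
  set q : ℝ → ℝ := fun x => |x| ^ (2 * β - 2) with hq_def
  have hqInt : IntegrableOn q (Set.Icc (-1:ℝ) 1) :=
    integrableOn_abs_rpow_Icc (by linarith)
  set h : ℝ → ℝ := fun x =>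
    Mc ^ 2 * ((Set.Icc (-1:ℝ) 1).indicator q x) + Mc * f_G x with hh_def
  have hh_int : Integrable h :=
    (((integrable_indicator_iff measurableSet_Icc).mpr hqInt).const_mul (Mc ^ 2)).add
      (hfG_int.const_mul Mc)
  have hfG_meas : AEStronglyMeasurable (fun x => f_G x ^ 2) volume := by
    have h0 : (fun x => f_G x ^ 2) = fun x => f_G x * f_G x := by funext x; ring
    rw [h0]
    exact hfG_int.aestronglyMeasurable.mul hfG_int.aestronglyMeasurable
  have hfG_sq_int : Integrable (fun x => f_G x ^ 2) := by
    refine hh_int.mono' hfG_meas ?_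
    filter_upwards [hae0] with x hx
    rw [Real.norm_of_nonneg (sq_nonneg _)]
    rcases le_or_gt |x| 1 with hx1 | hx1
    · have hmem : x ∈ Set.Icc (-1:ℝ) 1 := by
        rcases abs_le.mp hx1 with ⟨ha, hb⟩
        exact ⟨ha, hb⟩
      have e1 : f_G x ^ 2 ≤ (Mc * |x| ^ (β - 1)) ^ 2 :=
        pow_le_pow_left₀ (hfG_nonneg x) (hfG_le x hx) 2
      have e2' : (|x| ^ (β - 1)) ^ 2 = |x| ^ (2 * β - 2) := by
        rw [← Real.rpow_natCast (|x| ^ (β - 1)) 2, ← Real.rpow_mul (abs_nonneg x)]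
        congr 1
        push_cast
        ring
      have e2 : (Mc * |x| ^ (β - 1)) ^ 2 = Mc ^ 2 * q x := by
        simp only [hq_def]
        rw [mul_pow, e2']
      have e3 : 0 ≤ Mc * f_G x := mul_nonneg hMc0.le (hfG_nonneg x)
      rw [hh_def]
      simp only
      rw [Set.indicator_of_mem hmem]
      nlinarith [e1, e2, e3]
    · have h2 : |x| ^ (β - 1) ≤ 1 :=
        Real.rpow_le_one_of_one_le_of_nonpos hx1.le (by linarith)
      have e1 : f_G x ≤ Mc := by nlinarith [hfG_le x hx, h2, hMc0]
      have e2 : f_G x ^ 2 ≤ Mc * f_G x := by nlinarith [hfG_nonneg x]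
      have e3 : 0 ≤ (Set.Icc (-1:ℝ) 1).indicator q x :=
        Set.indicator_nonneg (fun y _ => Real.rpow_nonneg (abs_nonneg y) _) x
      rw [hh_def]
      simp only
      nlinarith [e2, e3, sq_nonneg Mc]
  set M₂ : ℝ := ∫ x : ℝ, f_G x ^ 2 with hM2_def
  have hIter : ∀ m : ℕ, Integrable (iterConv f_G (m + 1)) ∧
      (∀ x, 0 ≤ iterConv f_G (m + 1) x) ∧ (∫ x, iterConv f_G (m + 1) x) = 1 := by
    intro m
    induction m with
    | zero => exact ⟨hfG_int, hfG_nonneg, hfG_one⟩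
    | succ k ih =>
      obtain ⟨hi, hn, ho⟩ := ih
      refine ⟨conv_integrable hi hfG_int, conv_nonneg hn hfG_nonneg, ?_⟩
      show (∫ x, conv (iterConv f_G (k + 1)) f_G x) = 1
      rw [conv_integral hi hfG_int, ho, hfG_one, one_mul]
  have hconv2_le : ∀ x : ℝ, conv f_G f_G x ≤ M₂ := by
    intro x
    have hker : Integrable (fun y : ℝ => f_G (x - y) ^ 2) := hfG_sq_int.comp_sub_left x
    have hbig : Integrable (fun y : ℝ => (f_G (x - y) ^ 2 + f_G y ^ 2) / 2) :=
      (hker.add hfG_sq_int).div_const 2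
    have hle : conv f_G f_G x ≤ ∫ y : ℝ, (f_G (x - y) ^ 2 + f_G y ^ 2) / 2 := by
      show (∫ y : ℝ, f_G (x - y) * f_G y) ≤ _
      refine integral_mono_of_nonneg
        (ae_of_all _ fun y => mul_nonneg (hfG_nonneg _) (hfG_nonneg _)) hbig
        (ae_of_all _ fun y => ?_)
      nlinarith [sq_nonneg (f_G (x - y) - f_G y)]
    have heq : (∫ y : ℝ, (f_G (x - y) ^ 2 + f_G y ^ 2) / 2) = M₂ := by
      rw [integral_div, integral_add hker hfG_sq_int,
        integral_sub_left_eq_self (fun y : ℝ => f_G y ^ 2) volume x]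
      rw [hM2_def]
      ring
    linarith [hle, heq]
  have hIter_le : ∀ m : ℕ, ∀ x, iterConv f_G (m + 2) x ≤ M₂ := by
    intro m
    induction m with
    | zero => exact hconv2_le
    | succ k ih =>
      intro x
      show conv (iterConv f_G (k + 2)) f_G x ≤ M₂
      have h1 : (∫ y : ℝ, iterConv f_G (k + 2) (x - y) * f_G y) ≤ ∫ y : ℝ, M₂ * f_G y := by
        refine integral_mono_of_nonneg
          (ae_of_all _ fun y => mul_nonneg ((hIter (k + 1)).2.1 _) (hfG_nonneg _))
          (hfG_int.const_mul M₂)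
          (ae_of_all _ fun y => mul_le_mul_of_nonneg_right (ih _) (hfG_nonneg y))
      calc conv (iterConv f_G (k + 2)) f_G x ≤ ∫ y : ℝ, M₂ * f_G y := h1
        _ = M₂ := by rw [integral_const_mul, hfG_one, mul_one]
  have hIter_nonneg : ∀ m : ℕ, ∀ x, 0 ≤ iterConv f_G (m + 2) x :=
    fun m => (hIter (m + 1)).2.1
  exact main_aux f_G g hg_cont hg_nonneg hg_int M₂ hIter_nonneg hIter_le c hc B hB_cont hB V hV
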